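/- Unisolvence of the lowest-order 2D cubical Hermite 0-form element: Let Q₃ := span{x^i y^j : 0 ≤ i,j ≤ 3} ⊂ ℝ[x,y]. If p ∈ Q₃ satisfies p(ε,δ) = 0, (∂_x p)(ε,δ) = 0 and (∂_y p)(ε,δ) = 0 for all ε,δ ∈ {−1,1}, and ∫_{[−1,1]²} p q = 0 for every q ∈ span{1, x, y, xy}, then p = 0. -/

import Mathlib

open MvPolynomial

noncomputable section

/-- Polynomials in two variables `x, y` over `ℝ`. -/
abbrev M2 : Type := MvPolynomial (Fin 2) ℝ

def x : M2 := X 0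
def y : M2 := X 1

/-- The tensor-product space `Q₃ := span{x^i y^j : i, j ≤ 3}`. -/
def Q3 : Submodule ℝ M2 :=
  Submodule.span ℝ {p : M2 | ∃ i j : ℕ, i ≤ 3 ∧ j ≤ 3 ∧ p = x ^ i * y ^ j}

/-- The bilinear space `Q₁ := span{1, x, y, xy}`. -/
def Q1 : Submodule ℝ M2 := Submodule.span ℝ {1, x, y, x * y}

/-- Coefficient shortcut. -/
def cf (p : M2) (i j : ℕ) : ℝ := coeff (Finsupp.single 0 i + Finsupp.single 1 j) p

lemma single_add_single_inj (i j i' j' : ℕ) :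
    (Finsupp.single (0:Fin 2) i + Finsupp.single 1 j = Finsupp.single 0 i' + Finsupp.single 1 j')
      ↔ (i = i' ∧ j = j') := by
  constructor
  · intro h
    constructor
    · have := DFunLike.congr_fun h 0
      simpa [Finsupp.single_apply] using this
    · have := DFunLike.congr_fun h 1
      simpa [Finsupp.single_apply] using this
  · rintro ⟨rfl, rfl⟩; rfl

lemma monomial_eq' (i j : ℕ) (a : ℝ) :
    (monomial (Finsupp.single 0 i + Finsupp.single 1 j) a : M2) = C a * X 0 ^ i * X 1 ^ j := by
  rw [X_pow_eq_monomial, X_pow_eq_monomial, mul_assoc, monomial_mul, C_mul_monomial, mul_one,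
    mul_one]

lemma Q3_rep (p : M2) (hp : p ∈ Q3) :
    p = ∑ i ∈ Finset.range 4, ∑ j ∈ Finset.range 4, C (cf p i j) * X 0 ^ i * X 1 ^ j := by
  let L : M2 →ₗ[ℝ] M2 := ∑ i ∈ Finset.range 4, ∑ j ∈ Finset.range 4,
    (monomial (Finsupp.single 0 i + Finsupp.single 1 j)).comp
      (lcoeff ℝ (Finsupp.single 0 i + Finsupp.single 1 j))
  have hL : ∀ q ∈ Q3, L q = q := by
    intro q hq
    induction hq using Submodule.span_induction with
    | mem q hq =>
      obtain ⟨i, j, hi, hj, rfl⟩ := hq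
      have hxy : (x ^ i * y ^ j : M2) = monomial (Finsupp.single 0 i + Finsupp.single 1 j) 1 := by
        simp [x, y, X_pow_eq_monomial, monomial_mul]
      simp only [L, LinearMap.sum_apply, LinearMap.comp_apply, lcoeff_apply, hxy,
        coeff_monomial, single_add_single_inj]
      interval_cases i <;> interval_cases j <;>
        norm_num [Finset.sum_range_succ, monomial_zero]
    | zero => simp
    | add q r _ _ hq hr => simp [map_add, hq, hr]
    | smul c q _ hq => simp [map_smul, hq]
  have := hL p hp
  conv_lhs => rw [← this]
  simp [L, LinearMap.sum_apply, monomial_eq', cf]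

lemma integral_poly (c0 c1 c2 c3 c4 : ℝ) :
    (∫ u in (-1:ℝ)..1, (c0 + c1 * u + c2 * u ^ 2 + c3 * u ^ 3 + c4 * u ^ 4)) =
      2 * c0 + 2 / 3 * c2 + 2 / 5 * c4 := by
  have h : ∀ u ∈ Set.uIcc (-1:ℝ) 1,
      HasDerivAt (fun u : ℝ => c0 * u + c1 / 2 * u ^ 2 + c2 / 3 * u ^ 3 + c3 / 4 * u ^ 4
        + c4 / 5 * u ^ 5)
        (c0 + c1 * u + c2 * u ^ 2 + c3 * u ^ 3 + c4 * u ^ 4) u := by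
    intro u _
    have h1 := ((hasDerivAt_id u).const_mul c0).add
      (((hasDerivAt_pow 2 u).const_mul (c1 / 2)).add
        (((hasDerivAt_pow 3 u).const_mul (c2 / 3)).add
          (((hasDerivAt_pow 4 u).const_mul (c3 / 4)).add
            ((hasDerivAt_pow 5 u).const_mul (c4 / 5)))))
    convert h1 using 1
    · rfl
    · rfl
    · funext v
      simp only [id_eq, Pi.add_apply]
      ring
    · push_cast
      ring
  rw [intervalIntegral.integral_eq_sub_of_hasDerivAt h
    ((Continuous.intervalIntegrable (by continuity) _ _))]
  norm_num
  ring

set_option maxHeartbeats 1600000 in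
theorem hermite_2d_0form_unisolvent (p : M2) (hp : p ∈ Q3)
    (hval : ∀ ε ∈ ({-1, 1} : Set ℝ), ∀ δ ∈ ({-1, 1} : Set ℝ),
      eval ![ε, δ] p = 0)
    (hdx : ∀ ε ∈ ({-1, 1} : Set ℝ), ∀ δ ∈ ({-1, 1} : Set ℝ),
      eval ![ε, δ] (pderiv 0 p) = 0)
    (hdy : ∀ ε ∈ ({-1, 1} : Set ℝ), ∀ δ ∈ ({-1, 1} : Set ℝ),
      eval ![ε, δ] (pderiv 1 p) = 0)
    (hmom : ∀ q ∈ Q1,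
      (∫ s in (-1 : ℝ)..1, ∫ t in (-1 : ℝ)..1,
        eval ![s, t] p * eval ![s, t] q) = 0) :
    p = 0 := by
  have hrep := Q3_rep p hp
  have hev : ∀ s t : ℝ, eval ![s, t] p = cf p 0 0 + cf p 0 1 * t + cf p 0 2 * t ^ 2 + cf p 0 3 * t ^ 3 + cf p 1 0 * s + cf p 1 1 * s * t + cf p 1 2 * s * t ^ 2 + cf p 1 3 * s * t ^ 3 + cf p 2 0 * s ^ 2 + cf p 2 1 * s ^ 2 * t + cf p 2 2 * s ^ 2 * t ^ 2 + cf p 2 3 * s ^ 2 * t ^ 3 + cf p 3 0 * s ^ 3 + cf p 3 1 * s ^ 3 * t + cf p 3 2 * s ^ 3 * t ^ 2 + cf p 3 3 * s ^ 3 * t ^ 3 := by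
    intro s t
    conv_lhs => rw [hrep]
    simp only [Finset.sum_range_succ, Finset.sum_range_zero, map_add, map_mul, map_pow,
      eval_C, eval_X, Matrix.cons_val_zero, Matrix.cons_val_one, Matrix.head_cons, zero_add]
    ring
  have hevx : ∀ s t : ℝ, eval ![s, t] (pderiv 0 p) = cf p 1 0 + cf p 1 1 * t + cf p 1 2 * t ^ 2 + cf p 1 3 * t ^ 3 + 2 * cf p 2 0 * s + 2 * cf p 2 1 * s * t + 2 * cf p 2 2 * s * t ^ 2 + 2 * cf p 2 3 * s * t ^ 3 + 3 * cf p 3 0 * s ^ 2 + 3 * cf p 3 1 * s ^ 2 * t + 3 * cf p 3 2 * s ^ 2 * t ^ 2 + 3 * cf p 3 3 * s ^ 2 * t ^ 3 := by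
    intro s t
    conv_lhs => rw [hrep]
    simp only [Finset.sum_range_succ, Finset.sum_range_zero, map_add, map_zero, pderiv_mul,
      pderiv_C_mul, pderiv_pow, pderiv_X_self, pderiv_X_of_ne (by decide : (1:Fin 2) ≠ 0),
      pderiv_C, map_mul, map_pow, map_natCast, eval_C, eval_X, Matrix.cons_val_zero,
      Matrix.cons_val_one, Matrix.head_cons, zero_add, mul_zero, zero_mul, add_zero, mul_one]
    push_cast
    ring
  have hevy : ∀ s t : ℝ, eval ![s, t] (pderiv 1 p) = cf p 0 1 + 2 * cf p 0 2 * t + 3 * cf p 0 3 * t ^ 2 + cf p 1 1 * s + 2 * cf p 1 2 * s * t + 3 * cf p 1 3 * s * t ^ 2 + cf p 2 1 * s ^ 2 + 2 * cf p 2 2 * s ^ 2 * t + 3 * cf p 2 3 * s ^ 2 * t ^ 2 + cf p 3 1 * s ^ 3 + 2 * cf p 3 2 * s ^ 3 * t + 3 * cf p 3 3 * s ^ 3 * t ^ 2 := by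
    intro s t
    conv_lhs => rw [hrep]
    simp only [Finset.sum_range_succ, Finset.sum_range_zero, map_add, map_zero, pderiv_mul,
      pderiv_C_mul, pderiv_pow, pderiv_X_self, pderiv_X_of_ne (by decide : (0:Fin 2) ≠ 1),
      pderiv_C, map_mul, map_pow, map_natCast, eval_C, eval_X, Matrix.cons_val_zero,
      Matrix.cons_val_one, Matrix.head_cons, zero_add, mul_zero, zero_mul, add_zero, mul_one]
    push_cast
    ring
  have hv1 := hval (-1) (by norm_num) (-1) (by norm_num)
  rw [hev] at hv1
  have hx1 := hdx (-1) (by norm_num) (-1) (by norm_num)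
  rw [hevx] at hx1
  have hy1 := hdy (-1) (by norm_num) (-1) (by norm_num)
  rw [hevy] at hy1
  have hv2 := hval (-1) (by norm_num) 1 (by norm_num)
  rw [hev] at hv2
  have hx2 := hdx (-1) (by norm_num) 1 (by norm_num)
  rw [hevx] at hx2
  have hy2 := hdy (-1) (by norm_num) 1 (by norm_num)
  rw [hevy] at hy2
  have hv3 := hval 1 (by norm_num) (-1) (by norm_num)
  rw [hev] at hv3
  have hx3 := hdx 1 (by norm_num) (-1) (by norm_num)
  rw [hevx] at hx3
  have hy3 := hdy 1 (by norm_num) (-1) (by norm_num)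
  rw [hevy] at hy3
  have hv4 := hval 1 (by norm_num) 1 (by norm_num)
  rw [hev] at hv4
  have hx4 := hdx 1 (by norm_num) 1 (by norm_num)
  rw [hevx] at hx4
  have hy4 := hdy 1 (by norm_num) 1 (by norm_num)
  rw [hevy] at hy4
  have inner1 : ∀ s : ℝ, (∫ t in (-1:ℝ)..1, eval ![s, t] p * eval ![s, t] ((1 : M2))) =
      2 * (cf p 0 0 + cf p 1 0 * s + cf p 2 0 * s ^ 2 + cf p 3 0 * s ^ 3) + 2 / 3 * (cf p 0 2 + cf p 1 2 * s + cf p 2 2 * s ^ 2 + cf p 3 2 * s ^ 3) + 2 / 5 * (0:ℝ) := by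
    intro s
    rw [intervalIntegral.integral_congr (g := fun t : ℝ =>
        (cf p 0 0 + cf p 1 0 * s + cf p 2 0 * s ^ 2 + cf p 3 0 * s ^ 3) + (cf p 0 1 + cf p 1 1 * s + cf p 2 1 * s ^ 2 + cf p 3 1 * s ^ 3) * t + (cf p 0 2 + cf p 1 2 * s + cf p 2 2 * s ^ 2 + cf p 3 2 * s ^ 3) * t ^ 2 + (cf p 0 3 + cf p 1 3 * s + cf p 2 3 * s ^ 2 + cf p 3 3 * s ^ 3) * t ^ 3 + (0:ℝ) * t ^ 4)
      (fun t _ => by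
        rw [hev]
        simp only [x, y, map_one, map_mul, eval_X, Matrix.cons_val_zero, Matrix.cons_val_one,
          Matrix.head_cons]
        ring), integral_poly]
  have hm10 := hmom ((1 : M2)) (Submodule.subset_span (by simp))
  have hm1 : (∫ s in (-1:ℝ)..1,
      ((2 * cf p 0 0 + 2 / 3 * cf p 0 2) + (2 * cf p 1 0 + 2 / 3 * cf p 1 2) * s + (2 * cf p 2 0 + 2 / 3 * cf p 2 2) * s ^ 2 + (2 * cf p 3 0 + 2 / 3 * cf p 3 2) * s ^ 3 + (0:ℝ) * s ^ 4)) = 0 := by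
    rw [intervalIntegral.integral_congr
      (f := fun s : ℝ => (2 * cf p 0 0 + 2 / 3 * cf p 0 2) + (2 * cf p 1 0 + 2 / 3 * cf p 1 2) * s + (2 * cf p 2 0 + 2 / 3 * cf p 2 2) * s ^ 2 + (2 * cf p 3 0 + 2 / 3 * cf p 3 2) * s ^ 3 + (0:ℝ) * s ^ 4)
      (g := fun s : ℝ => ∫ t in (-1:ℝ)..1, eval ![s, t] p * eval ![s, t] ((1 : M2)))
      (fun s _ => by simp only [inner1]; ring)]
    exact hm10
  rw [integral_poly] at hm1
  have inner2 : ∀ s : ℝ, (∫ t in (-1:ℝ)..1, eval ![s, t] p * eval ![s, t] (x)) =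
      2 * ((cf p 0 0 + cf p 1 0 * s + cf p 2 0 * s ^ 2 + cf p 3 0 * s ^ 3) * s) + 2 / 3 * ((cf p 0 2 + cf p 1 2 * s + cf p 2 2 * s ^ 2 + cf p 3 2 * s ^ 3) * s) + 2 / 5 * (0:ℝ) := by
    intro s
    rw [intervalIntegral.integral_congr (g := fun t : ℝ =>
        ((cf p 0 0 + cf p 1 0 * s + cf p 2 0 * s ^ 2 + cf p 3 0 * s ^ 3) * s) + ((cf p 0 1 + cf p 1 1 * s + cf p 2 1 * s ^ 2 + cf p 3 1 * s ^ 3) * s) * t + ((cf p 0 2 + cf p 1 2 * s + cf p 2 2 * s ^ 2 + cf p 3 2 * s ^ 3) * s) * t ^ 2 + ((cf p 0 3 + cf p 1 3 * s + cf p 2 3 * s ^ 2 + cf p 3 3 * s ^ 3) * s) * t ^ 3 + (0:ℝ) * t ^ 4)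
      (fun t _ => by
        rw [hev]
        simp only [x, y, map_one, map_mul, eval_X, Matrix.cons_val_zero, Matrix.cons_val_one,
          Matrix.head_cons]
        ring), integral_poly]
  have hm20 := hmom (x) (Submodule.subset_span (by simp))
  have hm2 : (∫ s in (-1:ℝ)..1,
      ((0:ℝ) + (2 * cf p 0 0 + 2 / 3 * cf p 0 2) * s + (2 * cf p 1 0 + 2 / 3 * cf p 1 2) * s ^ 2 + (2 * cf p 2 0 + 2 / 3 * cf p 2 2) * s ^ 3 + (2 * cf p 3 0 + 2 / 3 * cf p 3 2) * s ^ 4)) = 0 := by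
    rw [intervalIntegral.integral_congr
      (f := fun s : ℝ => (0:ℝ) + (2 * cf p 0 0 + 2 / 3 * cf p 0 2) * s + (2 * cf p 1 0 + 2 / 3 * cf p 1 2) * s ^ 2 + (2 * cf p 2 0 + 2 / 3 * cf p 2 2) * s ^ 3 + (2 * cf p 3 0 + 2 / 3 * cf p 3 2) * s ^ 4)
      (g := fun s : ℝ => ∫ t in (-1:ℝ)..1, eval ![s, t] p * eval ![s, t] (x))
      (fun s _ => by simp only [inner2]; ring)]
    exact hm20
  rw [integral_poly] at hm2
  have inner3 : ∀ s : ℝ, (∫ t in (-1:ℝ)..1, eval ![s, t] p * eval ![s, t] (y)) =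
      2 * (0:ℝ) + 2 / 3 * (cf p 0 1 + cf p 1 1 * s + cf p 2 1 * s ^ 2 + cf p 3 1 * s ^ 3) + 2 / 5 * (cf p 0 3 + cf p 1 3 * s + cf p 2 3 * s ^ 2 + cf p 3 3 * s ^ 3) := by
    intro s
    rw [intervalIntegral.integral_congr (g := fun t : ℝ =>
        (0:ℝ) + (cf p 0 0 + cf p 1 0 * s + cf p 2 0 * s ^ 2 + cf p 3 0 * s ^ 3) * t + (cf p 0 1 + cf p 1 1 * s + cf p 2 1 * s ^ 2 + cf p 3 1 * s ^ 3) * t ^ 2 + (cf p 0 2 + cf p 1 2 * s + cf p 2 2 * s ^ 2 + cf p 3 2 * s ^ 3) * t ^ 3 + (cf p 0 3 + cf p 1 3 * s + cf p 2 3 * s ^ 2 + cf p 3 3 * s ^ 3) * t ^ 4)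
      (fun t _ => by
        rw [hev]
        simp only [x, y, map_one, map_mul, eval_X, Matrix.cons_val_zero, Matrix.cons_val_one,
          Matrix.head_cons]
        ring), integral_poly]
  have hm30 := hmom (y) (Submodule.subset_span (by simp))
  have hm3 : (∫ s in (-1:ℝ)..1,
      ((2 / 3 * cf p 0 1 + 2 / 5 * cf p 0 3) + (2 / 3 * cf p 1 1 + 2 / 5 * cf p 1 3) * s + (2 / 3 * cf p 2 1 + 2 / 5 * cf p 2 3) * s ^ 2 + (2 / 3 * cf p 3 1 + 2 / 5 * cf p 3 3) * s ^ 3 + (0:ℝ) * s ^ 4)) = 0 := by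
    rw [intervalIntegral.integral_congr
      (f := fun s : ℝ => (2 / 3 * cf p 0 1 + 2 / 5 * cf p 0 3) + (2 / 3 * cf p 1 1 + 2 / 5 * cf p 1 3) * s + (2 / 3 * cf p 2 1 + 2 / 5 * cf p 2 3) * s ^ 2 + (2 / 3 * cf p 3 1 + 2 / 5 * cf p 3 3) * s ^ 3 + (0:ℝ) * s ^ 4)
      (g := fun s : ℝ => ∫ t in (-1:ℝ)..1, eval ![s, t] p * eval ![s, t] (y))
      (fun s _ => by simp only [inner3]; ring)]
    exact hm30
  rw [integral_poly] at hm3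
  have inner4 : ∀ s : ℝ, (∫ t in (-1:ℝ)..1, eval ![s, t] p * eval ![s, t] (x * y)) =
      2 * (0:ℝ) + 2 / 3 * ((cf p 0 1 + cf p 1 1 * s + cf p 2 1 * s ^ 2 + cf p 3 1 * s ^ 3) * s) + 2 / 5 * ((cf p 0 3 + cf p 1 3 * s + cf p 2 3 * s ^ 2 + cf p 3 3 * s ^ 3) * s) := by
    intro s
    rw [intervalIntegral.integral_congr (g := fun t : ℝ =>
        (0:ℝ) + ((cf p 0 0 + cf p 1 0 * s + cf p 2 0 * s ^ 2 + cf p 3 0 * s ^ 3) * s) * t + ((cf p 0 1 + cf p 1 1 * s + cf p 2 1 * s ^ 2 + cf p 3 1 * s ^ 3) * s) * t ^ 2 + ((cf p 0 2 + cf p 1 2 * s + cf p 2 2 * s ^ 2 + cf p 3 2 * s ^ 3) * s) * t ^ 3 + ((cf p 0 3 + cf p 1 3 * s + cf p 2 3 * s ^ 2 + cf p 3 3 * s ^ 3) * s) * t ^ 4)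
      (fun t _ => by
        rw [hev]
        simp only [x, y, map_one, map_mul, eval_X, Matrix.cons_val_zero, Matrix.cons_val_one,
          Matrix.head_cons]
        ring), integral_poly]
  have hm40 := hmom (x * y) (Submodule.subset_span (by simp))
  have hm4 : (∫ s in (-1:ℝ)..1,
      ((0:ℝ) + (2 / 3 * cf p 0 1 + 2 / 5 * cf p 0 3) * s + (2 / 3 * cf p 1 1 + 2 / 5 * cf p 1 3) * s ^ 2 + (2 / 3 * cf p 2 1 + 2 / 5 * cf p 2 3) * s ^ 3 + (2 / 3 * cf p 3 1 + 2 / 5 * cf p 3 3) * s ^ 4)) = 0 := by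
    rw [intervalIntegral.integral_congr
      (f := fun s : ℝ => (0:ℝ) + (2 / 3 * cf p 0 1 + 2 / 5 * cf p 0 3) * s + (2 / 3 * cf p 1 1 + 2 / 5 * cf p 1 3) * s ^ 2 + (2 / 3 * cf p 2 1 + 2 / 5 * cf p 2 3) * s ^ 3 + (2 / 3 * cf p 3 1 + 2 / 5 * cf p 3 3) * s ^ 4)
      (g := fun s : ℝ => ∫ t in (-1:ℝ)..1, eval ![s, t] p * eval ![s, t] (x * y))
      (fun s _ => by simp only [inner4]; ring)]
    exact hm40
  rw [integral_poly] at hm4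
  have e00 : cf p 0 0 = 0 := by linear_combination (-5/16:ℝ) * hv1 + (-5/16:ℝ) * hv2 + (-5/16:ℝ) * hv3 + (-5/16:ℝ) * hv4 + (-1/16:ℝ) * hx1 + (-1/16:ℝ) * hx2 + (1/16:ℝ) * hx3 + (1/16:ℝ) * hx4 + (-1/16:ℝ) * hy1 + (1/16:ℝ) * hy2 + (-1/16:ℝ) * hy3 + (1/16:ℝ) * hy4 + (9/16:ℝ) * hm1
  have e01 : cf p 0 1 = 0 := by linear_combination (3/4:ℝ) * hv1 + (-3/4:ℝ) * hv2 + (3/4:ℝ) * hv3 + (-3/4:ℝ) * hv4 + (3/16:ℝ) * hx1 + (-3/16:ℝ) * hx2 + (-3/16:ℝ) * hx3 + (3/16:ℝ) * hx4 + (1/16:ℝ) * hy1 + (1/16:ℝ) * hy2 + (1/16:ℝ) * hy3 + (1/16:ℝ) * hy4 + (45/16:ℝ) * hm3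
  have e02 : cf p 0 2 = 0 := by linear_combination (9/16:ℝ) * hv1 + (9/16:ℝ) * hv2 + (9/16:ℝ) * hv3 + (9/16:ℝ) * hv4 + (3/16:ℝ) * hx1 + (3/16:ℝ) * hx2 + (-3/16:ℝ) * hx3 + (-3/16:ℝ) * hx4 + (1/16:ℝ) * hy1 + (-1/16:ℝ) * hy2 + (1/16:ℝ) * hy3 + (-1/16:ℝ) * hy4 + (-9/16:ℝ) * hm1
  have e03 : cf p 0 3 = 0 := by linear_combination (-1:ℝ) * hv1 + hv2 + (-1:ℝ) * hv3 + hv4 + (-5/16:ℝ) * hx1 + (5/16:ℝ) * hx2 + (5/16:ℝ) * hx3 + (-5/16:ℝ) * hx4 + (-1/16:ℝ) * hy1 + (-1/16:ℝ) * hy2 + (-1/16:ℝ) * hy3 + (-1/16:ℝ) * hy4 + (-45/16:ℝ) * hm3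
  have e10 : cf p 1 0 = 0 := by linear_combination (3/4:ℝ) * hv1 + (3/4:ℝ) * hv2 + (-3/4:ℝ) * hv3 + (-3/4:ℝ) * hv4 + (1/16:ℝ) * hx1 + (1/16:ℝ) * hx2 + (1/16:ℝ) * hx3 + (1/16:ℝ) * hx4 + (3/16:ℝ) * hy1 + (-3/16:ℝ) * hy2 + (-3/16:ℝ) * hy3 + (3/16:ℝ) * hy4 + (45/16:ℝ) * hm2
  have e11 : cf p 1 1 = 0 := by linear_combination (-27/16:ℝ) * hv1 + (27/16:ℝ) * hv2 + (27/16:ℝ) * hv3 + (-27/16:ℝ) * hv4 + (-3/16:ℝ) * hx1 + (3/16:ℝ) * hx2 + (-3/16:ℝ) * hx3 + (3/16:ℝ) * hx4 + (-3/16:ℝ) * hy1 + (-3/16:ℝ) * hy2 + (3/16:ℝ) * hy3 + (3/16:ℝ) * hy4 + (225/16:ℝ) * hm4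
  have e12 : cf p 1 2 = 0 := by linear_combination (-9/8:ℝ) * hv1 + (-9/8:ℝ) * hv2 + (9/8:ℝ) * hv3 + (9/8:ℝ) * hv4 + (-3/16:ℝ) * hx1 + (-3/16:ℝ) * hx2 + (-3/16:ℝ) * hx3 + (-3/16:ℝ) * hx4 + (-3/16:ℝ) * hy1 + (3/16:ℝ) * hy2 + (3/16:ℝ) * hy3 + (-3/16:ℝ) * hy4 + (-45/16:ℝ) * hm2
  have e13 : cf p 1 3 = 0 := by linear_combination (33/16:ℝ) * hv1 + (-33/16:ℝ) * hv2 + (-33/16:ℝ) * hv3 + (33/16:ℝ) * hv4 + (5/16:ℝ) * hx1 + (-5/16:ℝ) * hx2 + (5/16:ℝ) * hx3 + (-5/16:ℝ) * hx4 + (3/16:ℝ) * hy1 + (3/16:ℝ) * hy2 + (-3/16:ℝ) * hy3 + (-3/16:ℝ) * hy4 + (-225/16:ℝ) * hm4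
  have e20 : cf p 2 0 = 0 := by linear_combination (9/16:ℝ) * hv1 + (9/16:ℝ) * hv2 + (9/16:ℝ) * hv3 + (9/16:ℝ) * hv4 + (1/16:ℝ) * hx1 + (1/16:ℝ) * hx2 + (-1/16:ℝ) * hx3 + (-1/16:ℝ) * hx4 + (3/16:ℝ) * hy1 + (-3/16:ℝ) * hy2 + (3/16:ℝ) * hy3 + (-3/16:ℝ) * hy4 + (-9/16:ℝ) * hm1
  have e21 : cf p 2 1 = 0 := by linear_combination (-9/8:ℝ) * hv1 + (9/8:ℝ) * hv2 + (-9/8:ℝ) * hv3 + (9/8:ℝ) * hv4 + (-3/16:ℝ) * hx1 + (3/16:ℝ) * hx2 + (3/16:ℝ) * hx3 + (-3/16:ℝ) * hx4 + (-3/16:ℝ) * hy1 + (-3/16:ℝ) * hy2 + (-3/16:ℝ) * hy3 + (-3/16:ℝ) * hy4 + (-45/16:ℝ) * hm3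
  have e22 : cf p 2 2 = 0 := by linear_combination (-9/16:ℝ) * hv1 + (-9/16:ℝ) * hv2 + (-9/16:ℝ) * hv3 + (-9/16:ℝ) * hv4 + (-3/16:ℝ) * hx1 + (-3/16:ℝ) * hx2 + (3/16:ℝ) * hx3 + (3/16:ℝ) * hx4 + (-3/16:ℝ) * hy1 + (3/16:ℝ) * hy2 + (-3/16:ℝ) * hy3 + (3/16:ℝ) * hy4 + (9/16:ℝ) * hm1
  have e23 : cf p 2 3 = 0 := by linear_combination (9/8:ℝ) * hv1 + (-9/8:ℝ) * hv2 + (9/8:ℝ) * hv3 + (-9/8:ℝ) * hv4 + (5/16:ℝ) * hx1 + (-5/16:ℝ) * hx2 + (-5/16:ℝ) * hx3 + (5/16:ℝ) * hx4 + (3/16:ℝ) * hy1 + (3/16:ℝ) * hy2 + (3/16:ℝ) * hy3 + (3/16:ℝ) * hy4 + (45/16:ℝ) * hm3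
  have e30 : cf p 3 0 = 0 := by linear_combination (-1:ℝ) * hv1 + (-1:ℝ) * hv2 + hv3 + hv4 + (-1/16:ℝ) * hx1 + (-1/16:ℝ) * hx2 + (-1/16:ℝ) * hx3 + (-1/16:ℝ) * hx4 + (-5/16:ℝ) * hy1 + (5/16:ℝ) * hy2 + (5/16:ℝ) * hy3 + (-5/16:ℝ) * hy4 + (-45/16:ℝ) * hm2
  have e31 : cf p 3 1 = 0 := by linear_combination (33/16:ℝ) * hv1 + (-33/16:ℝ) * hv2 + (-33/16:ℝ) * hv3 + (33/16:ℝ) * hv4 + (3/16:ℝ) * hx1 + (-3/16:ℝ) * hx2 + (3/16:ℝ) * hx3 + (-3/16:ℝ) * hx4 + (5/16:ℝ) * hy1 + (5/16:ℝ) * hy2 + (-5/16:ℝ) * hy3 + (-5/16:ℝ) * hy4 + (-225/16:ℝ) * hm4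
  have e32 : cf p 3 2 = 0 := by linear_combination (9/8:ℝ) * hv1 + (9/8:ℝ) * hv2 + (-9/8:ℝ) * hv3 + (-9/8:ℝ) * hv4 + (3/16:ℝ) * hx1 + (3/16:ℝ) * hx2 + (3/16:ℝ) * hx3 + (3/16:ℝ) * hx4 + (5/16:ℝ) * hy1 + (-5/16:ℝ) * hy2 + (-5/16:ℝ) * hy3 + (5/16:ℝ) * hy4 + (45/16:ℝ) * hm2
  have e33 : cf p 3 3 = 0 := by linear_combination (-35/16:ℝ) * hv1 + (35/16:ℝ) * hv2 + (35/16:ℝ) * hv3 + (-35/16:ℝ) * hv4 + (-5/16:ℝ) * hx1 + (5/16:ℝ) * hx2 + (-5/16:ℝ) * hx3 + (5/16:ℝ) * hx4 + (-5/16:ℝ) * hy1 + (-5/16:ℝ) * hy2 + (5/16:ℝ) * hy3 + (5/16:ℝ) * hy4 + (225/16:ℝ) * hm4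
  rw [hrep]
  simp [Finset.sum_range_succ, e00, e01, e02, e03, e10, e11, e12, e13, e20, e21, e22, e23,
    e30, e31, e32, e33]

end
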